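/- arXiv:1503.08626 — 3 statements merged into one kernel-verified Lean document; each statement's English description precedes it below -/
import Mathlib

section
/- Let d ≥ 1 and let c > 0 be a Pach constant for dimension d. Let H = (V_0, …, V_d, E) be a (d+1)-partite hypergraph and let ε > 0. If Disc(H) ≤ c^{d+1} − ε, then H has the ε-geometric overlap property. -/
open scoped Classical

/-- `c > 0` is a Pach constant for dimension `d` if for all pairwise disjoint finite point
sets `P 0, …, P d ⊂ ℝ^d` there exist `p ∈ ℝ^d` and subsets `Q i ⊆ P i` with
`|Q i| ≥ c·|P i|`, such that every simplex with one vertex in each `Q i` contains `p`. -/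
def IsPachConstant (d : ℕ) (c : ℝ) : Prop :=
  ∀ P : Fin (d + 1) → Finset (EuclideanSpace ℝ (Fin d)),
    (∀ i j, i ≠ j → Disjoint (P i) (P j)) →
    ∃ (p : EuclideanSpace ℝ (Fin d)) (Q : Fin (d + 1) → Finset (EuclideanSpace ℝ (Fin d))),
      (∀ i, Q i ⊆ P i) ∧
      (∀ i, c * ((P i).card : ℝ) ≤ ((Q i).card : ℝ)) ∧
      ∀ x : Fin (d + 1) → EuclideanSpace ℝ (Fin d),
        (∀ i, x i ∈ Q i) → p ∈ convexHull ℝ (Set.range x)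

/-- **Overlap criterion via discrepancy.** Let `d ≥ 1` and let `c > 0` be a Pach constant for
dimension `d`. Let `H = (V 0, …, V d, E)` be a `(d+1)`-partite hypergraph (the `V i` are finite,
nonempty and pairwise disjoint, `E` is a nonempty set of edges, each edge having its `i`-th
vertex in `V i`) and let `ε > 0`. If `Disc(H) ≤ c^(d+1) − ε` (i.e. for every choice of subsets
`W i ⊆ V i` the discrepancy expression is at most `c^(d+1) − ε`), then `H` has the `ε`-geometric
overlap property: for every map `f` of the vertices into `ℝ^d`, injective on the vertex set,
there is a point `p ∈ ℝ^d` contained in the convex hulls of the images of at least `ε·|E|`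
of the edges. -/
theorem overlap_of_discrepancy {α : Type*} [DecidableEq α] (d : ℕ) (hd : 1 ≤ d)
    (c : ℝ) (hc : 0 < c) (hPach : IsPachConstant d c)
    (V : Fin (d + 1) → Finset α) (E : Finset (Fin (d + 1) → α))
    (hVne : ∀ i, (V i).Nonempty)
    (hVdisj : ∀ i j, i ≠ j → Disjoint (V i) (V j))
    (hEne : E.Nonempty)
    (hEV : ∀ e ∈ E, ∀ i, e i ∈ V i)
    (ε : ℝ) (hε : 0 < ε)
    (hdisc : ∀ W : Fin (d + 1) → Finset α, (∀ i, W i ⊆ V i) →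
      |((E.filter fun e => ∀ i, e i ∈ W i).card : ℝ) / (E.card : ℝ) -
        ∏ i, ((W i).card : ℝ) / ((V i).card : ℝ)| ≤ c ^ (d + 1) - ε) :
    ∀ f : α → EuclideanSpace ℝ (Fin d), Set.InjOn f (⋃ i, (V i : Set α)) →
      ∃ p : EuclideanSpace ℝ (Fin d),
        ε * (E.card : ℝ) ≤
          ((E.filter fun e => p ∈ convexHull ℝ (Set.range fun i => f (e i))).card : ℝ) := by

  intro f hf
  set P : Fin (d + 1) → Finset (EuclideanSpace ℝ (Fin d)) := fun i => (V i).image f with hP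
  have hPdisj : ∀ i j, i ≠ j → Disjoint (P i) (P j) := by
    intro i j hij
    rw [Finset.disjoint_left]
    intro x hxi hxj
    simp only [hP, Finset.mem_image] at hxi hxj
    obtain ⟨a, ha, rfl⟩ := hxi
    obtain ⟨b, hb, hab⟩ := hxj
    have hab' : b = a := hf (Set.mem_iUnion.2 ⟨j, hb⟩) (Set.mem_iUnion.2 ⟨i, ha⟩) hab
    subst hab'
    exact (Finset.disjoint_left.1 (hVdisj i j hij)) ha hb
  obtain ⟨p, Q, hQsub, hQcard, hQhull⟩ := hPach P hPdisj
  refine ⟨p, ?_⟩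
  set W : Fin (d + 1) → Finset α := fun i => (V i).filter (fun v => f v ∈ Q i) with hW
  have hWsub : ∀ i, W i ⊆ V i := fun i => Finset.filter_subset _ _
  have hinj : ∀ i, Set.InjOn f (V i : Set α) := fun i =>
    hf.mono (Set.subset_iUnion (fun i => (V i : Set α)) i)
  have himg : ∀ i, (W i).image f = Q i := by
    intro i
    apply Finset.Subset.antisymm
    · intro x hx
      simp only [Finset.mem_image, hW, Finset.mem_filter] at hx
      obtain ⟨a, ⟨_, h⟩, rfl⟩ := hx; exact h
    · intro q hq
      have hq' := hQsub i hq
      simp only [hP, Finset.mem_image] at hq'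
      obtain ⟨v, hv, rfl⟩ := hq'
      exact Finset.mem_image.2 ⟨v, Finset.mem_filter.2 ⟨hv, hq⟩, rfl⟩
  have hWcard : ∀ i, c * ((V i).card : ℝ) ≤ ((W i).card : ℝ) := by
    intro i
    have h1 : (W i).card = (Q i).card := by
      rw [← himg i]
      exact (Finset.card_image_of_injOn ((hinj i).mono (Finset.coe_subset.2 (hWsub i)))).symm
    have h2 : (P i).card = (V i).card := Finset.card_image_of_injOn (hinj i)
    rw [h1]
    have h3 := hQcard i
    rwa [h2] at h3
  have hVpos : ∀ i, 0 < ((V i).card : ℝ) := fun i => by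
    exact_mod_cast Finset.card_pos.2 (hVne i)
  have hprod : c ^ (d + 1) ≤ ∏ i, ((W i).card : ℝ) / ((V i).card : ℝ) := by
    have hle : ∀ i ∈ Finset.univ, c ≤ ((W i).card : ℝ) / ((V i).card : ℝ) := by
      intro i _
      rw [le_div_iff₀ (hVpos i)]
      exact hWcard i
    calc c ^ (d + 1) = ∏ _i : Fin (d + 1), c := by
          rw [Finset.prod_const, Finset.card_univ, Fintype.card_fin]
      _ ≤ _ := Finset.prod_le_prod (fun i _ => le_of_lt hc) hle
  have hdisc' := abs_le.1 (hdisc W hWsub)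
  have hEpos : 0 < (E.card : ℝ) := by exact_mod_cast Finset.card_pos.2 hEne
  have hA : ε * (E.card : ℝ) ≤ ((E.filter fun e => ∀ i, e i ∈ W i).card : ℝ) := by
    rw [← le_div_iff₀ hEpos]
    linarith [hdisc'.1, hprod]
  have hsub : (E.filter fun e => ∀ i, e i ∈ W i) ⊆
      (E.filter fun e => p ∈ convexHull ℝ (Set.range fun i => f (e i))) := by
    intro e he
    rw [Finset.mem_filter] at he ⊢
    refine ⟨he.1, hQhull _ fun i => ?_⟩
    have h := he.2 i
    simp only [hW, Finset.mem_filter] at h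
    exact h.2
  calc ε * (E.card : ℝ) ≤ _ := hA
    _ ≤ _ := by exact_mod_cast Finset.card_le_card hsub
end

section
/- (Hypergraph mixing lemma.) Let d ≥ 1 and let H = (V_0, …, V_d, E) be a type-regular (d+1)-partite hypergraph in which every vertex belongs to at least one edge. For each i = 0, …, d let B_i be the i-induced bipartite graph of vertices versus walls (which is biregular by type-regularity), and let λ̃(B_i) be its normalized second largest eigenvalue. Then Disc(H) ≤ d · max_{i=0,…,d} λ̃(B_i). -/
open scoped Classical

noncomputable section

/-- Restriction of an edge `e : Fin N → α` to the coordinates in `I`, i.e. the `I`-face of `e`. -/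
def resF {α : Type*} {N : ℕ} (I : Finset (Fin N)) (e : Fin N → α) : {j : Fin N // j ∈ I} → α :=
  fun j => e j.1

/-- The set of `I`-faces of the hypergraph with edge set `E`. -/
def faces {α : Type*} [DecidableEq α] {N : ℕ} (E : Finset (Fin N → α)) (I : Finset (Fin N)) :
    Finset ({j : Fin N // j ∈ I} → α) :=
  E.image (resF I)

/-- The cotype of `i` : all coordinates except `i`. -/
def cotype {N : ℕ} (i : Fin N) : Finset (Fin N) := Finset.univ.erase i

/-- Insert the vertex `v` in the `i`-th coordinate of the wall `w` (a face of cotype `i`),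
producing a candidate edge. -/
def combineF {α : Type*} {N : ℕ} (i : Fin N) (v : α)
    (w : {j : Fin N // j ∈ cotype i} → α) : Fin N → α :=
  fun j => if h : j ∈ cotype i then w ⟨j, h⟩ else v

/-- The normalized second largest eigenvalue `λ̃(B_i)` of the `i`-induced bipartite graph of
vertices (`V i`) versus `i`-cotype walls, for a biregular bipartite graph with degrees
`D i` (on the vertex side) and `δ i` (on the wall side): the supremum of
`|∑_{(v,w) adjacent} f(v)·g(w)| / (√(D·δ)·‖f‖₂·‖g‖₂)` over nonzero mean-zero
functions `f` on `V i` and `g` on the walls. -/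
def lamTildeB {α : Type*} [DecidableEq α] {d : ℕ}
    (V : Fin (d + 1) → Finset α) (E : Finset (Fin (d + 1) → α))
    (D δ : Fin (d + 1) → ℕ) (i : Fin (d + 1)) : ℝ :=
  sSup {r : ℝ |
    ∃ (f : α → ℝ) (g : ({j : Fin (d + 1) // j ∈ cotype i} → α) → ℝ),
      (∃ v ∈ V i, f v ≠ 0) ∧ (∃ w ∈ faces E (cotype i), g w ≠ 0) ∧
      (∑ v ∈ V i, f v) = 0 ∧ (∑ w ∈ faces E (cotype i), g w) = 0 ∧
      r = |∑ v ∈ V i, ∑ w ∈ faces E (cotype i),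
              (if combineF i v w ∈ E then f v * g w else 0)| /
          (Real.sqrt ((D i : ℝ) * (δ i : ℝ)) *
            Real.sqrt (∑ v ∈ V i, (f v) ^ 2) *
            Real.sqrt (∑ w ∈ faces E (cotype i), (g w) ^ 2))}

lemma combineF_resF {α : Type*} {N : ℕ} (i : Fin N) (e : Fin N → α) :
    combineF i (e i) (resF (cotype i) e) = e := by
  funext j
  unfold combineF resF cotype
  split_ifs with h
  · rfl
  · simp only [Finset.mem_erase, Finset.mem_univ, and_true] at h
    push_neg at h
    rw [h]
lemma resF_combineF {α : Type*} {N : ℕ} (i : Fin N) (v : α)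
    (w : {j : Fin N // j ∈ cotype i} → α) :
    resF (cotype i) (combineF i v w) = w := by
  funext j
  show (if h : j.1 ∈ cotype i then w ⟨j.1, h⟩ else v) = w j
  rw [dif_pos j.2]
lemma combineF_self {α : Type*} {N : ℕ} (i : Fin N) (v : α)
    (w : {j : Fin N // j ∈ cotype i} → α) :
    combineF i v w i = v := by
  unfold combineF
  rw [dif_neg]
  simp [cotype]
lemma sum_edges_eq {α : Type*} [DecidableEq α] {N : ℕ} (E : Finset (Fin N → α)) (i : Fin N)
    (Vi : Finset α) (hEV : ∀ e ∈ E, e i ∈ Vi)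
    (F : α → ({j : Fin N // j ∈ cotype i} → α) → ℝ) :
    ∑ e ∈ E, F (e i) (resF (cotype i) e)
      = ∑ v ∈ Vi, ∑ w ∈ faces E (cotype i), if combineF i v w ∈ E then F v w else 0 := by
  rw [← Finset.sum_product']
  rw [← Finset.sum_filter (fun p : α × ({j : Fin N // j ∈ cotype i} → α) => combineF i p.1 p.2 ∈ E) (fun p => F p.1 p.2)]
  refine Finset.sum_nbij' (fun e => (e i, resF (cotype i) e))
    (fun p => combineF i p.1 p.2) ?_ ?_ ?_ ?_ ?_
  · intro e he
    simp only [Finset.mem_product, Finset.mem_filter]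
    refine ⟨⟨hEV e he, Finset.mem_image_of_mem _ he⟩, ?_⟩
    rw [combineF_resF]; exact he
  · intro p hp
    simp only [Finset.mem_filter, Finset.mem_product] at hp
    exact hp.2
  · intro e _
    exact combineF_resF i e
  · intro p _
    ext
    · exact combineF_self i p.1 p.2
    · exact congrFun (resF_combineF i p.1 p.2) _
  · intro e _
    rfl

-- NEW PART
section Counting
variable {α : Type*} [DecidableEq α] {d : ℕ}
  (V : Fin (d + 1) → Finset α) (E : Finset (Fin (d + 1) → α)) (D δ : Fin (d + 1) → ℕ)

lemma lamTilde_nonneg (i : Fin (d + 1)) : 0 ≤ lamTildeB V E D δ i := by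
  apply Real.sSup_nonneg
  rintro r ⟨f, g, _, _, _, _, rfl⟩
  positivity

lemma card_E_eq_V_mul_D (hEV : ∀ e ∈ E, ∀ i, e i ∈ V i) (i : Fin (d + 1))
    (hdegV : ∀ v ∈ V i,
      ((faces E (cotype i)).filter (fun w => combineF i v w ∈ E)).card = D i) :
    (E.card : ℝ) = ((V i).card : ℝ) * (D i : ℝ) := by
  calc (E.card : ℝ) = ∑ e ∈ E, (1 : ℝ) := by simp
    _ = ∑ v ∈ V i, ∑ w ∈ faces E (cotype i),
          if combineF i v w ∈ E then (1 : ℝ) else 0 :=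
        sum_edges_eq E i (V i) (fun e he => hEV e he i) (fun _ _ => 1)
    _ = ∑ v ∈ V i, (D i : ℝ) := by
        refine Finset.sum_congr rfl fun v hv => ?_
        rw [Finset.sum_boole, hdegV v hv]
    _ = ((V i).card : ℝ) * (D i : ℝ) := by rw [Finset.sum_const, nsmul_eq_mul]

lemma card_E_eq_W_mul_delta (hEV : ∀ e ∈ E, ∀ i, e i ∈ V i) (i : Fin (d + 1))
    (hdegW : ∀ w ∈ faces E (cotype i),
      ((V i).filter (fun v => combineF i v w ∈ E)).card = δ i) :
    (E.card : ℝ) = ((faces E (cotype i)).card : ℝ) * (δ i : ℝ) := by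
  calc (E.card : ℝ) = ∑ e ∈ E, (1 : ℝ) := by simp
    _ = ∑ v ∈ V i, ∑ w ∈ faces E (cotype i),
          if combineF i v w ∈ E then (1 : ℝ) else 0 :=
        sum_edges_eq E i (V i) (fun e he => hEV e he i) (fun _ _ => 1)
    _ = ∑ w ∈ faces E (cotype i), ∑ v ∈ V i,
          if combineF i v w ∈ E then (1 : ℝ) else 0 := Finset.sum_comm
    _ = ∑ w ∈ faces E (cotype i), (δ i : ℝ) := by
        refine Finset.sum_congr rfl fun w hw => ?_
        rw [Finset.sum_boole, hdegW w hw]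
    _ = _ := by rw [Finset.sum_const, nsmul_eq_mul]

lemma count_one_coord (hEV : ∀ e ∈ E, ∀ i, e i ∈ V i) (i : Fin (d + 1))
    (hdegV : ∀ v ∈ V i,
      ((faces E (cotype i)).filter (fun w => combineF i v w ∈ E)).card = D i)
    (Wi : Finset α) (hWi : Wi ⊆ V i) :
    ((E.filter fun e => e i ∈ Wi).card : ℝ) = (Wi.card : ℝ) * (D i : ℝ) := by
  calc ((E.filter fun e => e i ∈ Wi).card : ℝ)
      = ∑ e ∈ E, (if e i ∈ Wi then (1 : ℝ) else 0) := by rw [Finset.sum_boole]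
    _ = ∑ v ∈ V i, ∑ w ∈ faces E (cotype i),
          if combineF i v w ∈ E then (if v ∈ Wi then (1 : ℝ) else 0) else 0 :=
        sum_edges_eq E i (V i) (fun e he => hEV e he i)
          (fun v _ => if v ∈ Wi then (1 : ℝ) else 0)
    _ = ∑ v ∈ V i, (if v ∈ Wi then (1 : ℝ) else 0) * (D i : ℝ) := by
        refine Finset.sum_congr rfl fun v hv => ?_
        by_cases h : v ∈ Wi
        · simp only [h, if_true, one_mul]
          rw [Finset.sum_boole, hdegV v hv]
        · simp [h]
    _ = (∑ v ∈ V i, if v ∈ Wi then (1 : ℝ) else 0) * (D i : ℝ) := by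
        rw [Finset.sum_mul]
    _ = (Wi.card : ℝ) * (D i : ℝ) := by
        rw [Finset.sum_boole, Finset.filter_mem_eq_inter, Finset.inter_eq_right.mpr hWi]

end Counting

section CS
variable {α : Type*} [DecidableEq α] {d : ℕ}
  (V : Fin (d + 1) → Finset α) (E : Finset (Fin (d + 1) → α)) (D δ : Fin (d + 1) → ℕ)

/-- Transfer bilinear sums over adjacent pairs to a filtered product sum. -/
lemma bilin_eq_pair_sum (i : Fin (d + 1))
    (F : α → ({j : Fin (d + 1) // j ∈ cotype i} → α) → ℝ) :
    (∑ v ∈ V i, ∑ w ∈ faces E (cotype i), if combineF i v w ∈ E then F v w else 0)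
      = ∑ q ∈ (V i ×ˢ faces E (cotype i)).filter
          (fun q => combineF i q.1 q.2 ∈ E), F q.1 q.2 := by
  rw [← Finset.sum_product']
  rw [← Finset.sum_filter (fun q : α × ({j : Fin (d + 1) // j ∈ cotype i} → α) =>
    combineF i q.1 q.2 ∈ E) (fun q => F q.1 q.2)]

lemma pair_sum_left (i : Fin (d + 1))
    (hdegV : ∀ v ∈ V i,
      ((faces E (cotype i)).filter (fun w => combineF i v w ∈ E)).card = D i)
    (φ : α → ℝ) :
    (∑ q ∈ (V i ×ˢ faces E (cotype i)).filter
        (fun q => combineF i q.1 q.2 ∈ E), φ q.1)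
      = (D i : ℝ) * ∑ v ∈ V i, φ v := by
  rw [← bilin_eq_pair_sum V E i (fun v _ => φ v)]
  rw [Finset.mul_sum]
  refine Finset.sum_congr rfl fun v hv => ?_
  rw [← Finset.sum_filter, Finset.sum_const, hdegV v hv, nsmul_eq_mul, mul_comm]

lemma pair_sum_right (i : Fin (d + 1))
    (hdegW : ∀ w ∈ faces E (cotype i),
      ((V i).filter (fun v => combineF i v w ∈ E)).card = δ i)
    (ψ : ({j : Fin (d + 1) // j ∈ cotype i} → α) → ℝ) :
    (∑ q ∈ (V i ×ˢ faces E (cotype i)).filter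
        (fun q => combineF i q.1 q.2 ∈ E), ψ q.2)
      = (δ i : ℝ) * ∑ w ∈ faces E (cotype i), ψ w := by
  rw [← bilin_eq_pair_sum V E i (fun _ w => ψ w)]
  rw [Finset.sum_comm, Finset.mul_sum]
  refine Finset.sum_congr rfl fun w hw => ?_
  rw [← Finset.sum_filter, Finset.sum_const, hdegW w hw, nsmul_eq_mul, mul_comm]

lemma lamTilde_set_bddAbove (i : Fin (d + 1))
    (hdegV : ∀ v ∈ V i,
      ((faces E (cotype i)).filter (fun w => combineF i v w ∈ E)).card = D i)
    (hdegW : ∀ w ∈ faces E (cotype i),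
      ((V i).filter (fun v => combineF i v w ∈ E)).card = δ i) :
    BddAbove {r : ℝ |
      ∃ (f : α → ℝ) (g : ({j : Fin (d + 1) // j ∈ cotype i} → α) → ℝ),
        (∃ v ∈ V i, f v ≠ 0) ∧ (∃ w ∈ faces E (cotype i), g w ≠ 0) ∧
        (∑ v ∈ V i, f v) = 0 ∧ (∑ w ∈ faces E (cotype i), g w) = 0 ∧
        r = |∑ v ∈ V i, ∑ w ∈ faces E (cotype i),
                (if combineF i v w ∈ E then f v * g w else 0)| /
            (Real.sqrt ((D i : ℝ) * (δ i : ℝ)) *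
              Real.sqrt (∑ v ∈ V i, (f v) ^ 2) *
              Real.sqrt (∑ w ∈ faces E (cotype i), (g w) ^ 2))} := by
  refine ⟨1, ?_⟩
  rintro r ⟨f, g, _, _, _, _, rfl⟩
  set t := (V i ×ˢ faces E (cotype i)).filter (fun q => combineF i q.1 q.2 ∈ E) with ht
  have hB : (∑ v ∈ V i, ∑ w ∈ faces E (cotype i),
      if combineF i v w ∈ E then f v * g w else 0) = ∑ q ∈ t, f q.1 * g q.2 :=
    bilin_eq_pair_sum V E i (fun v w => f v * g w)
  have habs : |∑ q ∈ t, f q.1 * g q.2| ≤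
      Real.sqrt (∑ q ∈ t, (f q.1) ^ 2) * Real.sqrt (∑ q ∈ t, (g q.2) ^ 2) := by
    calc |∑ q ∈ t, f q.1 * g q.2| ≤ ∑ q ∈ t, |f q.1 * g q.2| :=
          Finset.abs_sum_le_sum_abs _ _
      _ = ∑ q ∈ t, |f q.1| * |g q.2| := by simp [abs_mul]
      _ ≤ Real.sqrt (∑ q ∈ t, |f q.1| ^ 2) * Real.sqrt (∑ q ∈ t, |g q.2| ^ 2) :=
          Real.sum_mul_le_sqrt_mul_sqrt _ _ _
      _ = _ := by simp [sq_abs]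
  have hf2 : (∑ q ∈ t, (f q.1) ^ 2) = (D i : ℝ) * ∑ v ∈ V i, (f v) ^ 2 :=
    pair_sum_left V E D i hdegV (fun v => (f v) ^ 2)
  have hg2 : (∑ q ∈ t, (g q.2) ^ 2) = (δ i : ℝ) * ∑ w ∈ faces E (cotype i), (g w) ^ 2 :=
    pair_sum_right V E δ i hdegW (fun w => (g w) ^ 2)
  have hden : Real.sqrt (∑ q ∈ t, (f q.1) ^ 2) * Real.sqrt (∑ q ∈ t, (g q.2) ^ 2)
      = Real.sqrt ((D i : ℝ) * (δ i : ℝ)) *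
          Real.sqrt (∑ v ∈ V i, (f v) ^ 2) *
          Real.sqrt (∑ w ∈ faces E (cotype i), (g w) ^ 2) := by
    rw [hf2, hg2]
    rw [Real.sqrt_mul (by positivity), Real.sqrt_mul (by positivity),
        Real.sqrt_mul (by positivity)]
    ring
  rw [hB]
  set den := Real.sqrt ((D i : ℝ) * (δ i : ℝ)) *
      Real.sqrt (∑ v ∈ V i, (f v) ^ 2) *
      Real.sqrt (∑ w ∈ faces E (cotype i), (g w) ^ 2) with hdendef
  have hden0 : 0 ≤ den := by positivity
  rcases eq_or_lt_of_le hden0 with h0 | h0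
  · rw [← h0, div_zero]; norm_num
  · rw [div_le_one h0]
    calc |∑ q ∈ t, f q.1 * g q.2| ≤ _ := habs
      _ = den := hden

end CS

section KeyEst
variable {α : Type*} [DecidableEq α] {d : ℕ}

set_option maxHeartbeats 2000000 in
lemma key_estimate (V : Fin (d + 1) → Finset α) (E : Finset (Fin (d + 1) → α))
    (D δ : Fin (d + 1) → ℕ)
    (hEne : E.Nonempty) (hEV : ∀ e ∈ E, ∀ i, e i ∈ V i)
    (hD1 : ∀ i, 1 ≤ D i) (hδ1 : ∀ i, 1 ≤ δ i)
    (i : Fin (d + 1))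
    (hdegV : ∀ v ∈ V i,
      ((faces E (cotype i)).filter (fun w => combineF i v w ∈ E)).card = D i)
    (hdegW : ∀ w ∈ faces E (cotype i),
      ((V i).filter (fun v => combineF i v w ∈ E)).card = δ i)
    (Wi : Finset α) (hWi : Wi ⊆ V i)
    (Q : ({j : Fin (d + 1) // j ∈ cotype i} → α) → Prop) :
    |((E.filter fun e => e i ∈ Wi ∧ Q (resF (cotype i) e)).card : ℝ)
        - ((Wi.card : ℝ) / ((V i).card : ℝ)) *
            ((E.filter fun e => Q (resF (cotype i) e)).card : ℝ)|
      ≤ lamTildeB V E D δ i * (E.card : ℝ) := by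
  classical
  obtain ⟨e0, he0⟩ := hEne
  have hVpos : 0 < ((V i).card : ℝ) := by
    have : (V i).Nonempty := ⟨e0 i, hEV e0 he0 i⟩
    exact_mod_cast Finset.card_pos.mpr this
  have hNwpos : 0 < ((faces E (cotype i)).card : ℝ) := by
    have : (faces E (cotype i)).Nonempty := ⟨resF (cotype i) e0, Finset.mem_image_of_mem _ he0⟩
    exact_mod_cast Finset.card_pos.mpr this
  set p : ℝ := (Wi.card : ℝ) / ((V i).card : ℝ) with hpdef
  set Nw : ℝ := ((faces E (cotype i)).card : ℝ) with hNwdef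
  set Gc : ℝ := (((faces E (cotype i)).filter Q).card : ℝ) with hGcdef
  set m : ℝ := Gc / Nw with hmdef
  set f : α → ℝ := fun v => (if v ∈ Wi then 1 else 0) - p with hfdef
  set g : ({j : Fin (d + 1) // j ∈ cotype i} → α) → ℝ :=
    fun w => (if Q w then 1 else 0) - m with hgdef
  have hpV : p * ((V i).card : ℝ) = (Wi.card : ℝ) := div_mul_cancel₀ _ (ne_of_gt hVpos)
  have hmN : m * Nw = Gc := div_mul_cancel₀ _ (ne_of_gt hNwpos)
  have hEc : (E.card : ℝ) = ((V i).card : ℝ) * (D i : ℝ) :=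
    card_E_eq_V_mul_D V E D hEV i hdegV
  have hEw : (E.card : ℝ) = Nw * (δ i : ℝ) :=
    card_E_eq_W_mul_delta V E δ hEV i hdegW
  have hp0 : 0 ≤ p := by positivity
  have hp1 : p ≤ 1 := by
    rw [hpdef, div_le_one hVpos]
    exact_mod_cast Finset.card_le_card hWi
  have hm0 : 0 ≤ m := by positivity
  have hm1 : m ≤ 1 := by
    rw [hmdef, div_le_one hNwpos, hGcdef, hNwdef]
    exact_mod_cast Finset.card_le_card (Finset.filter_subset _ _)
  -- the bilinear sum
  set B : ℝ := ∑ v ∈ V i, ∑ w ∈ faces E (cotype i),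
      (if combineF i v w ∈ E then f v * g w else 0) with hBdef
  -- identity : B = S' - p * S
  have hSum1 : (∑ e ∈ E, (if e i ∈ Wi then (1:ℝ) else 0) * (if Q (resF (cotype i) e) then (1:ℝ) else 0))
      = ((E.filter fun e => e i ∈ Wi ∧ Q (resF (cotype i) e)).card : ℝ) := by
    rw [← Finset.sum_boole]
    refine Finset.sum_congr rfl fun e _ => ?_
    by_cases h1 : e i ∈ Wi <;> by_cases h2 : Q (resF (cotype i) e) <;> simp [h1, h2]
  have hSum2 : (∑ e ∈ E, (if Q (resF (cotype i) e) then (1:ℝ) else 0))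
      = ((E.filter fun e => Q (resF (cotype i) e)).card : ℝ) := by rw [Finset.sum_boole]
  have hSum3 : (∑ e ∈ E, (if e i ∈ Wi then (1:ℝ) else 0)) = (Wi.card : ℝ) * (D i : ℝ) := by
    rw [Finset.sum_boole]
    have := count_one_coord V E D hEV i hdegV Wi hWi
    exact_mod_cast this
  have hB : B = ((E.filter fun e => e i ∈ Wi ∧ Q (resF (cotype i) e)).card : ℝ)
      - p * ((E.filter fun e => Q (resF (cotype i) e)).card : ℝ) := by
    have h0 : B = ∑ e ∈ E, f (e i) * g (resF (cotype i) e) :=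
      (sum_edges_eq E i (V i) (fun e he => hEV e he i) (fun v w => f v * g w)).symm
    have h1 : ∀ e ∈ E, f (e i) * g (resF (cotype i) e)
        = (if e i ∈ Wi then (1:ℝ) else 0) * (if Q (resF (cotype i) e) then (1:ℝ) else 0)
          - p * (if Q (resF (cotype i) e) then (1:ℝ) else 0)
          - m * (if e i ∈ Wi then (1:ℝ) else 0) + p * m := by
      intro e _
      rw [hfdef, hgdef]
      ring
    rw [h0, Finset.sum_congr rfl h1]
    rw [Finset.sum_add_distrib, Finset.sum_sub_distrib, Finset.sum_sub_distrib,
        ← Finset.mul_sum, ← Finset.mul_sum, Finset.sum_const, nsmul_eq_mul]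
    rw [hSum1, hSum2, hSum3]
    have : m * ((Wi.card : ℝ) * (D i : ℝ)) = (E.card : ℝ) * (p * m) := by
      rw [hEc, ← hpV]; ring
    rw [this]
    ring
  -- norms
  have hfsum : (∑ v ∈ V i, f v) = 0 := by
    rw [hfdef]
    rw [Finset.sum_sub_distrib, Finset.sum_const, nsmul_eq_mul, Finset.sum_boole,
        Finset.filter_mem_eq_inter, Finset.inter_eq_right.mpr hWi]
    rw [← hpV]; ring
  have hgsum : (∑ w ∈ faces E (cotype i), g w) = 0 := by
    rw [hgdef]
    rw [Finset.sum_sub_distrib, Finset.sum_const, nsmul_eq_mul, Finset.sum_boole]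
    rw [← hGcdef, ← hNwdef, ← hmN]; ring
  have hf2 : (∑ v ∈ V i, (f v) ^ 2) = ((V i).card : ℝ) * (p * (1 - p)) := by
    have h1 : ∀ v ∈ V i, (f v) ^ 2
        = (if v ∈ Wi then (1:ℝ) else 0) * (1 - 2 * p) + p ^ 2 := by
      intro v _
      rw [hfdef]
      by_cases h : v ∈ Wi <;> simp [h] <;> ring
    rw [Finset.sum_congr rfl h1, Finset.sum_add_distrib, ← Finset.sum_mul,
        Finset.sum_boole, Finset.filter_mem_eq_inter, Finset.inter_eq_right.mpr hWi,
        Finset.sum_const, nsmul_eq_mul, ← hpV]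
    ring
  have hg2 : (∑ w ∈ faces E (cotype i), (g w) ^ 2) = Nw * (m * (1 - m)) := by
    have h1 : ∀ w ∈ faces E (cotype i), (g w) ^ 2
        = (if Q w then (1:ℝ) else 0) * (1 - 2 * m) + m ^ 2 := by
      intro w _
      rw [hgdef]
      by_cases h : Q w <;> simp [h] <;> ring
    rw [Finset.sum_congr rfl h1, Finset.sum_add_distrib, ← Finset.sum_mul,
        Finset.sum_boole, Finset.sum_const, nsmul_eq_mul, ← hGcdef, ← hNwdef, ← hmN]
    ring
  rw [← hB]
  -- case analysis
  by_cases hcase : (∀ v ∈ V i, f v = 0) ∨ (∀ w ∈ faces E (cotype i), g w = 0)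
  · have hB0 : B = 0 := by
      rcases hcase with h | h
      · refine Finset.sum_eq_zero fun v hv => Finset.sum_eq_zero fun w hw => ?_
        rw [h v hv]
        simp
      · refine Finset.sum_eq_zero fun v hv => Finset.sum_eq_zero fun w hw => ?_
        rw [h w hw]
        simp
    rw [hB0, abs_zero]
    exact mul_nonneg (lamTilde_nonneg V E D δ i) (by positivity)
  · push_neg at hcase
    obtain ⟨⟨v0, hv0, hfv0⟩, ⟨w0, hw0, hgw0⟩⟩ := hcase
    have hfpos : 0 < (∑ v ∈ V i, (f v) ^ 2) :=
      Finset.sum_pos' (fun v _ => sq_nonneg _) ⟨v0, hv0, by positivity⟩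
    have hgpos : 0 < (∑ w ∈ faces E (cotype i), (g w) ^ 2) :=
      Finset.sum_pos' (fun w _ => sq_nonneg _) ⟨w0, hw0, by positivity⟩
    have hDδpos : 0 < Real.sqrt ((D i : ℝ) * (δ i : ℝ)) := by
      apply Real.sqrt_pos.mpr
      have h1 : (1 : ℝ) ≤ (D i : ℝ) := by exact_mod_cast hD1 i
      have h2 : (1 : ℝ) ≤ (δ i : ℝ) := by exact_mod_cast hδ1 i
      nlinarith
    set den : ℝ := Real.sqrt ((D i : ℝ) * (δ i : ℝ)) *
        Real.sqrt (∑ v ∈ V i, (f v) ^ 2) *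
        Real.sqrt (∑ w ∈ faces E (cotype i), (g w) ^ 2) with hdendef
    have hdenpos : 0 < den := by
      apply mul_pos (mul_pos hDδpos (Real.sqrt_pos.mpr hfpos)) (Real.sqrt_pos.mpr hgpos)
    have hmem : |B| / den ∈ {r : ℝ |
      ∃ (f : α → ℝ) (g : ({j : Fin (d + 1) // j ∈ cotype i} → α) → ℝ),
        (∃ v ∈ V i, f v ≠ 0) ∧ (∃ w ∈ faces E (cotype i), g w ≠ 0) ∧
        (∑ v ∈ V i, f v) = 0 ∧ (∑ w ∈ faces E (cotype i), g w) = 0 ∧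
        r = |∑ v ∈ V i, ∑ w ∈ faces E (cotype i),
                (if combineF i v w ∈ E then f v * g w else 0)| /
            (Real.sqrt ((D i : ℝ) * (δ i : ℝ)) *
              Real.sqrt (∑ v ∈ V i, (f v) ^ 2) *
              Real.sqrt (∑ w ∈ faces E (cotype i), (g w) ^ 2))} :=
      ⟨f, g, ⟨v0, hv0, hfv0⟩, ⟨w0, hw0, hgw0⟩, hfsum, hgsum, rfl⟩
    have hle : |B| / den ≤ lamTildeB V E D δ i :=
      le_csSup (lamTilde_set_bddAbove V E D δ i hdegV hdegW) hmem
    have hBle : |B| ≤ lamTildeB V E D δ i * den := by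
      rw [div_le_iff₀ hdenpos] at hle
      exact hle
    refine hBle.trans ?_
    apply mul_le_mul_of_nonneg_left _ (lamTilde_nonneg V E D δ i)
    -- den ≤ E.card
    have hDδnn : (0:ℝ) ≤ (D i : ℝ) * (δ i : ℝ) := by positivity
    have hden_eq : den = Real.sqrt ((D i : ℝ) * (δ i : ℝ) *
        ((∑ v ∈ V i, (f v) ^ 2) * (∑ w ∈ faces E (cotype i), (g w) ^ 2))) := by
      rw [hdendef,
        Real.sqrt_mul hDδnn ((∑ v ∈ V i, (f v) ^ 2) * (∑ w ∈ faces E (cotype i), (g w) ^ 2)),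
        Real.sqrt_mul (le_of_lt hfpos) (∑ w ∈ faces E (cotype i), (g w) ^ 2)]
      ring
    have hprod : (D i : ℝ) * (δ i : ℝ) *
        ((∑ v ∈ V i, (f v) ^ 2) * (∑ w ∈ faces E (cotype i), (g w) ^ 2))
        ≤ ((E.card : ℝ)) ^ 2 := by
      rw [hf2, hg2]
      have ha : p * (1 - p) ≤ 1 := by nlinarith
      have hb : m * (1 - m) ≤ 1 := by nlinarith
      have ha0 : 0 ≤ p * (1 - p) := by nlinarith
      have hb0 : 0 ≤ m * (1 - m) := by nlinarith
      have hVnn : (0:ℝ) ≤ ((V i).card : ℝ) := le_of_lt hVpos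
      have hNnn : (0:ℝ) ≤ Nw := le_of_lt hNwpos
      have hDnn : (0:ℝ) ≤ (D i : ℝ) := by positivity
      have hδnn : (0:ℝ) ≤ (δ i : ℝ) := by positivity
      calc (D i : ℝ) * (δ i : ℝ) * ((((V i).card : ℝ) * (p * (1 - p))) * (Nw * (m * (1 - m))))
          = (((V i).card : ℝ) * (D i : ℝ)) * (Nw * (δ i : ℝ)) * ((p * (1 - p)) * (m * (1 - m))) := by
            ring
        _ ≤ (((V i).card : ℝ) * (D i : ℝ)) * (Nw * (δ i : ℝ)) * 1 := by
            apply mul_le_mul_of_nonneg_left _ (by positivity)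
            exact mul_le_one₀ ha hb0 hb
        _ = ((E.card : ℝ)) ^ 2 := by rw [← hEc, ← hEw]; ring
    rw [hden_eq]
    calc Real.sqrt _ ≤ Real.sqrt (((E.card : ℝ)) ^ 2) := Real.sqrt_le_sqrt hprod
      _ = (E.card : ℝ) := Real.sqrt_sq (by positivity)

lemma key_estimate' (V : Fin (d + 1) → Finset α) (E : Finset (Fin (d + 1) → α))
    (D δ : Fin (d + 1) → ℕ)
    (hEne : E.Nonempty) (hEV : ∀ e ∈ E, ∀ i, e i ∈ V i)
    (hD1 : ∀ i, 1 ≤ D i) (hδ1 : ∀ i, 1 ≤ δ i)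
    (i : Fin (d + 1))
    (hdegV : ∀ v ∈ V i,
      ((faces E (cotype i)).filter (fun w => combineF i v w ∈ E)).card = D i)
    (hdegW : ∀ w ∈ faces E (cotype i),
      ((V i).filter (fun v => combineF i v w ∈ E)).card = δ i)
    (Wi : Finset α) (hWi : Wi ⊆ V i)
    (Q : ({j : Fin (d + 1) // j ∈ cotype i} → α) → Prop)
    (S' T : Finset (Fin (d + 1) → α))
    (hS' : ∀ e, e ∈ S' ↔ (e ∈ E ∧ (e i ∈ Wi ∧ Q (resF (cotype i) e))))
    (hT : ∀ e, e ∈ T ↔ (e ∈ E ∧ Q (resF (cotype i) e))) :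
    |(S'.card : ℝ) - ((Wi.card : ℝ) / ((V i).card : ℝ)) * (T.card : ℝ)|
      ≤ lamTildeB V E D δ i * (E.card : ℝ) := by
  classical
  have h1 : S' = E.filter (fun e => e i ∈ Wi ∧ Q (resF (cotype i) e)) := by
    ext e
    rw [Finset.mem_filter]
    exact hS' e
  have h2 : T = E.filter (fun e => Q (resF (cotype i) e)) := by
    ext e
    rw [Finset.mem_filter]
    exact hT e
  rw [h1, h2]
  exact key_estimate V E D δ hEne hEV hD1 hδ1 i hdegV hdegW Wi hWi Q

end KeyEst

set_option maxHeartbeats 2000000 in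
/-- **Hypergraph mixing lemma.** Let `d ≥ 1` and let `H = (V 0, …, V d, E)` be a type-regular
`(d+1)`-partite hypergraph in which every vertex belongs to at least one edge. For each `i`,
let `B_i` be the `i`-induced bipartite graph of vertices versus walls, which is
`(D i, δ i)`-biregular by type-regularity. Then
`Disc(H) ≤ d · max_i λ̃(B_i)`, i.e. for all subsets `W i ⊆ V i`,
`| |E(W_0,…,W_d)|/|E| − ∏ |W i|/|V i| | ≤ d · max_i λ̃(B_i)`. -/
theorem hypergraph_mixing_lemma {α : Type*} [DecidableEq α] (d : ℕ) (hd : 1 ≤ d)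
    (V : Fin (d + 1) → Finset α) (E : Finset (Fin (d + 1) → α))
    (hVne : ∀ i, (V i).Nonempty)
    (hVdisj : ∀ i j, i ≠ j → Disjoint (V i) (V j))
    (hEne : E.Nonempty)
    (hEV : ∀ e ∈ E, ∀ i, e i ∈ V i)
    -- every vertex belongs to at least one edge
    (hcover : ∀ i, ∀ v ∈ V i, ∃ e ∈ E, e i = v)
    -- type-regularity : every `I`-face extends to the same number of `J`-faces
    (hreg : ∀ I J : Finset (Fin (d + 1)), ∀ hIJ : I ⊆ J, ∃ k : ℕ,
      ∀ f ∈ faces E I,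
        ((faces E J).filter
          (fun g => ∀ j : {j : Fin (d + 1) // j ∈ I}, g ⟨j.1, hIJ j.2⟩ = f j)).card = k)
    -- the bidegrees of the `i`-induced bipartite graphs (deduced from type-regularity)
    (D δ : Fin (d + 1) → ℕ)
    (hD1 : ∀ i, 1 ≤ D i) (hδ1 : ∀ i, 1 ≤ δ i)
    (hdegV : ∀ i, ∀ v ∈ V i,
      ((faces E (cotype i)).filter (fun w => combineF i v w ∈ E)).card = D i)
    (hdegW : ∀ i, ∀ w ∈ faces E (cotype i),
      ((V i).filter (fun v => combineF i v w ∈ E)).card = δ i) :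
    ∀ W : Fin (d + 1) → Finset α, (∀ i, W i ⊆ V i) →
      |((E.filter fun e => ∀ i, e i ∈ W i).card : ℝ) / (E.card : ℝ) -
          ∏ i, ((W i).card : ℝ) / ((V i).card : ℝ)| ≤
        (d : ℝ) * ⨆ i, lamTildeB V E D δ i := by
  intro W hW
  classical
  have hbddM : BddAbove (Set.range fun i => lamTildeB V E D δ i) :=
    Set.Finite.bddAbove (Set.finite_range _)
  set M : ℝ := ⨆ i, lamTildeB V E D δ i with hM
  have hlam_le : ∀ i, lamTildeB V E D δ i ≤ M := fun i => le_ciSup hbddM i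
  have hM0 : 0 ≤ M := le_trans (lamTilde_nonneg V E D δ 0) (hlam_le 0)
  have hEpos : 0 < (E.card : ℝ) := by exact_mod_cast Finset.card_pos.mpr hEne
  have hVpos : ∀ i, 0 < ((V i).card : ℝ) := fun i => by
    exact_mod_cast Finset.card_pos.mpr (hVne i)
  set p : Fin (d + 1) → ℝ := fun i => ((W i).card : ℝ) / ((V i).card : ℝ) with hp
  have hp0 : ∀ i, 0 ≤ p i := fun i => by rw [hp]; positivity
  have hp1 : ∀ i, p i ≤ 1 := fun i => by
    rw [hp]
    exact (div_le_one (hVpos i)).mpr (by exact_mod_cast Finset.card_le_card (hW i))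
  set A : ℕ → ℝ := fun k =>
    ((E.filter fun e => ∀ j : Fin (d + 1), (j : ℕ) < k → e j ∈ W j).card : ℝ) / (E.card : ℝ)
    with hA
  set P : ℕ → ℝ := fun k =>
    ∏ j ∈ Finset.univ.filter (fun j : Fin (d + 1) => k ≤ (j : ℕ)), p j with hP
  have hA0 : A 0 = 1 := by
    simp only [hA]
    have h : (E.filter fun e => ∀ j : Fin (d + 1), (j : ℕ) < 0 → e j ∈ W j) = E :=
      Finset.filter_true_of_mem (fun e _ => fun j hj => absurd hj (Nat.not_lt_zero _))
    simp only [h]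
    exact div_self (ne_of_gt hEpos)
  have hP0 : P 0 = ∏ i, p i := by
    simp only [hP]
    congr 1
    exact Finset.filter_true_of_mem (fun j _ => Nat.zero_le _)
  have hPd1 : P (d + 1) = 1 := by
    simp only [hP]
    have h : Finset.univ.filter (fun j : Fin (d + 1) => d + 1 ≤ (j : ℕ)) = ∅ := by
      ext j
      simp only [Finset.mem_filter, Finset.mem_univ, true_and, Finset.notMem_empty,
        iff_false, not_le]
      exact j.isLt
    rw [h, Finset.prod_empty]
  have hAd : ((E.filter fun e => ∀ i, e i ∈ W i).card : ℝ) / (E.card : ℝ) = A (d + 1) := by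
    have hsets : (E.filter fun e => ∀ j : Fin (d + 1), (j : ℕ) < d + 1 → e j ∈ W j)
        = (E.filter fun e => ∀ i, e i ∈ W i) :=
      Finset.filter_congr fun e _ => ⟨fun h i => h i i.isLt, fun h j _ => h j⟩
    simp only [hA, hsets]
  have hP01 : ∀ k, 0 ≤ P k ∧ P k ≤ 1 := by
    intro k
    simp only [hP]
    constructor
    · exact Finset.prod_nonneg fun j _ => hp0 j
    · exact Finset.prod_le_one (fun j _ => hp0 j) (fun j _ => hp1 j)
  -- the key step bound
  have key : ∀ k ∈ Finset.range (d + 1),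
      |A (k + 1) * P (k + 1) - A k * P k| ≤ (if k = 0 then 0 else M) := by
    intro k hk
    rw [Finset.mem_range] at hk
    set i : Fin (d + 1) := ⟨k, hk⟩ with hi
    have hival : (i : ℕ) = k := rfl
    have hj_ne : ∀ j : Fin (d + 1), (j : ℕ) ≠ k → j ∈ cotype i := by
      intro j hj
      simp only [cotype, Finset.mem_erase, Finset.mem_univ, and_true]
      intro hji
      exact hj (by rw [hji])
    -- split off the i-th factor of P k
    have hsplit : Finset.univ.filter (fun j : Fin (d + 1) => k ≤ (j : ℕ))
        = insert i (Finset.univ.filter (fun j : Fin (d + 1) => k + 1 ≤ (j : ℕ))) := by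
      ext j
      simp only [Finset.mem_filter, Finset.mem_univ, true_and, Finset.mem_insert]
      constructor
      · intro h
        rcases Nat.eq_or_lt_of_le h with h' | h'
        · left; exact Fin.ext h'.symm
        · right; exact h'
      · rintro (rfl | h)
        · exact le_refl _
        · omega
    have hnotmem : i ∉ Finset.univ.filter (fun j : Fin (d + 1) => k + 1 ≤ (j : ℕ)) := by
      simp only [Finset.mem_filter, Finset.mem_univ, true_and, not_le, hival]
      omega
    have hPk : P k = p i * P (k + 1) := by
      simp only [hP]
      rw [hsplit, Finset.prod_insert hnotmem]
    -- the central estimate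
    have habs : |A (k + 1) - p i * A k| ≤ (if k = 0 then 0 else lamTildeB V E D δ i) := by
      by_cases hk0 : k = 0
      · subst hk0
        rw [if_pos rfl]
        have h1 : (E.filter fun e => ∀ j : Fin (d + 1), (j : ℕ) < 0 + 1 → e j ∈ W j)
            = E.filter (fun e => e i ∈ W i) := by
          refine Finset.filter_congr fun e _ => ?_
          constructor
          · intro h
            exact h i (by rw [hival]; omega)
          · intro h j hj
            have : j = i := Fin.ext (by omega)
            rw [this]; exact h
        have h0 : (E.filter fun e => ∀ j : Fin (d + 1), (j : ℕ) < 0 → e j ∈ W j) = E :=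
          Finset.filter_true_of_mem (fun e _ => fun j hj => absurd hj (Nat.not_lt_zero _))
        have hcount := count_one_coord V E D hEV i (hdegV i) (W i) (hW i)
        have hEc : (E.card : ℝ) = ((V i).card : ℝ) * (D i : ℝ) :=
          card_E_eq_V_mul_D V E D hEV i (hdegV i)
        have hDpos : (0 : ℝ) < (D i : ℝ) := by exact_mod_cast hD1 i
        have hA1 : A (0 + 1) = p i := by
          simp only [hA]
          simp only [h1]
          rw [hcount, hEc, hp]
          rw [mul_div_mul_right _ _ (ne_of_gt hDpos)]
        have hA0' : A 0 = 1 := hA0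
        rw [hA1, hA0', mul_one, sub_self, abs_zero]
      · rw [if_neg hk0]
        have hiff1 : ∀ e : Fin (d + 1) → α,
            (∀ j : Fin (d + 1), (j : ℕ) < k + 1 → e j ∈ W j)
              ↔ (e i ∈ W i ∧ ∀ j : {j : Fin (d + 1) // j ∈ cotype i},
                  (j.1 : ℕ) < k → resF (cotype i) e j ∈ W j.1) := by
          intro e
          constructor
          · intro h
            exact ⟨h i (by rw [hival]; omega), fun j hj => h j.1 (by omega)⟩
          · rintro ⟨h1, h2⟩ j hj
            by_cases hjk : (j : ℕ) = k
            · have hj' : j = i := Fin.ext (by rw [hival]; exact hjk)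
              rw [hj']
              exact h1
            · exact h2 ⟨j, hj_ne j hjk⟩ (show (j : ℕ) < k by omega)
        have hiff2 : ∀ e : Fin (d + 1) → α,
            (∀ j : Fin (d + 1), (j : ℕ) < k → e j ∈ W j)
              ↔ (∀ j : {j : Fin (d + 1) // j ∈ cotype i},
                  (j.1 : ℕ) < k → resF (cotype i) e j ∈ W j.1) := by
          intro e
          constructor
          · intro h j hj
            exact h j.1 hj
          · intro h j hj
            exact h ⟨j, hj_ne j (by omega)⟩ hj
        have hkey := key_estimate' V E D δ hEne hEV hD1 hδ1 i (hdegV i) (hdegW i)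
          (W i) (hW i)
          (fun w => ∀ j : {j : Fin (d + 1) // j ∈ cotype i}, (j.1 : ℕ) < k → w j ∈ W j.1)
          (E.filter fun e => ∀ j : Fin (d + 1), (j : ℕ) < k + 1 → e j ∈ W j)
          (E.filter fun e => ∀ j : Fin (d + 1), (j : ℕ) < k → e j ∈ W j)
          (fun e => by
            rw [Finset.mem_filter]
            exact and_congr_right fun _ => hiff1 e)
          (fun e => by
            rw [Finset.mem_filter]
            exact and_congr_right fun _ => hiff2 e)
        have hpi : ((W i).card : ℝ) / ((V i).card : ℝ) = p i := by rw [hp]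
        rw [hpi] at hkey
        have hrw : A (k + 1) - p i * A k
            = (((E.filter fun e => ∀ j : Fin (d + 1), (j : ℕ) < k + 1 → e j ∈ W j).card : ℝ)
               - p i * ((E.filter fun e => ∀ j : Fin (d + 1), (j : ℕ) < k → e j ∈ W j).card : ℝ))
              / (E.card : ℝ) := by
          simp only [hA]
          ring
        rw [hrw, abs_div, abs_of_pos hEpos, div_le_iff₀ hEpos]
        exact hkey
    have heq : A (k + 1) * P (k + 1) - A k * P k = (A (k + 1) - p i * A k) * P (k + 1) := by
      rw [hPk]; ring
    rw [heq, abs_mul]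
    have hPle : |P (k + 1)| ≤ 1 := by
      rw [abs_of_nonneg (hP01 (k + 1)).1]
      exact (hP01 (k + 1)).2
    have hb0 : (0:ℝ) ≤ (if k = 0 then 0 else lamTildeB V E D δ i) := by
      split
      · exact le_refl 0
      · exact lamTilde_nonneg V E D δ i
    calc |A (k + 1) - p i * A k| * |P (k + 1)|
        ≤ (if k = 0 then 0 else lamTildeB V E D δ i) * 1 :=
          mul_le_mul habs hPle (abs_nonneg _) hb0
      _ ≤ (if k = 0 then 0 else M) := by
          rw [mul_one]
          split
          · exact le_refl 0
          · exact hlam_le i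
  calc |((E.filter fun e => ∀ i, e i ∈ W i).card : ℝ) / (E.card : ℝ) -
          ∏ i, ((W i).card : ℝ) / ((V i).card : ℝ)|
      = |A (d + 1) * P (d + 1) - A 0 * P 0| := by
        rw [hAd, hPd1, hA0, hP0, mul_one, one_mul]
    _ = |∑ k ∈ Finset.range (d + 1), (A (k + 1) * P (k + 1) - A k * P k)| := by
        rw [Finset.sum_range_sub (fun k => A k * P k)]
    _ ≤ ∑ k ∈ Finset.range (d + 1), |A (k + 1) * P (k + 1) - A k * P k| :=
        Finset.abs_sum_le_sum_abs _ _
    _ ≤ ∑ k ∈ Finset.range (d + 1), (if k = 0 then 0 else M) :=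
        Finset.sum_le_sum key
    _ = (d : ℝ) * M := by
        rw [Finset.sum_range_succ']
        simp only [Nat.succ_ne_zero, if_false, if_true, add_zero, ite_self]
        simp


end
end

section
/- Let n ≥ 1, let 0 ≤ p ≤ 1 be a real number, and let X_1, …, X_n be random variables on a finite probability space, each taking values in {0, 1, 2}. Suppose that for each i = 1, …, n and each tuple (a_1, …, a_{i−1}) ∈ {0,1,2}^{i−1} with P(X_1 = a_1, …, X_{i−1} = a_{i−1}) > 0, the conditional probabilities satisfy P(X_i = 1 | X_1 = a_1, …, X_{i−1} = a_{i−1}) ≤ p and P(X_i = 2 | X_1 = a_1, …, X_{i−1} = a_{i−1}) ≤ p². Then for every integer m with 0 ≤ m ≤ 2n, P(X_1 + X_2 + ⋯ + X_n = m) ≤ 3^n · p^m. -/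
/-- Let `n ≥ 1`, let `0 ≤ p ≤ 1`, and let `X 1, …, X n` be random variables on a finite
probability space `(Ω, μ)`, each taking values in `{0, 1, 2}`. Suppose that, conditioned on
any values of the previous variables (with positive probability), `X i = 1` has conditional
probability at most `p` and `X i = 2` has conditional probability at most `p²`. Then for
every `m ≤ 2n`, the probability that `X 1 + ⋯ + X n = m` is at most `3^n · p^m`. -/
theorem prob_sum_eq_le {Ω : Type*} [Fintype Ω] [DecidableEq Ω]
    (μ : Ω → ℝ) (hμ0 : ∀ ω, 0 ≤ μ ω) (hμ1 : ∑ ω, μ ω = 1)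
    (n : ℕ) (hn : 1 ≤ n) (p : ℝ) (hp0 : 0 ≤ p) (hp1 : p ≤ 1)
    (X : Fin n → Ω → ℕ) (hX : ∀ i ω, X i ω ≤ 2)
    (hcond : ∀ (i : Fin n) (a : Fin n → ℕ),
      0 < ∑ ω ∈ Finset.univ.filter (fun ω => ∀ j : Fin n, j < i → X j ω = a j), μ ω →
      ((∑ ω ∈ Finset.univ.filter
            (fun ω => X i ω = 1 ∧ ∀ j : Fin n, j < i → X j ω = a j), μ ω) /
          (∑ ω ∈ Finset.univ.filter (fun ω => ∀ j : Fin n, j < i → X j ω = a j), μ ω) ≤ p ∧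
        (∑ ω ∈ Finset.univ.filter
            (fun ω => X i ω = 2 ∧ ∀ j : Fin n, j < i → X j ω = a j), μ ω) /
          (∑ ω ∈ Finset.univ.filter (fun ω => ∀ j : Fin n, j < i → X j ω = a j), μ ω) ≤ p ^ 2)) :
    ∀ m : ℕ, m ≤ 2 * n →
      (∑ ω ∈ Finset.univ.filter (fun ω => ∑ i, X i ω = m), μ ω) ≤ 3 ^ n * p ^ m := by
  classical
  intro m hm
  have hnonneg : ∀ (s : Finset Ω), (0:ℝ) ≤ ∑ ω ∈ s, μ ω :=
    fun s => Finset.sum_nonneg fun ω _ => hμ0 ω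
  have hmono : ∀ (s t : Finset Ω), s ⊆ t → ∑ ω ∈ s, μ ω ≤ ∑ ω ∈ t, μ ω :=
    fun s t hst => Finset.sum_le_sum_of_subset_of_nonneg hst (fun ω _ _ => hμ0 ω)
  -- Chain rule
  have key : ∀ (a : Fin n → ℕ), (∀ i, a i ≤ 2) → ∀ k : ℕ, k ≤ n →
      (∑ ω ∈ Finset.univ.filter (fun ω => ∀ j : Fin n, (j:ℕ) < k → X j ω = a j), μ ω)
        ≤ p ^ (∑ j ∈ Finset.univ.filter (fun j : Fin n => (j:ℕ) < k), a j) := by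
    intro a ha k
    induction k with
    | zero =>
      intro _
      have h1 : (Finset.univ.filter (fun ω : Ω => ∀ j : Fin n, (j:ℕ) < 0 → X j ω = a j))
          = Finset.univ := by
        apply Finset.filter_true_of_mem; intro ω _ j hj; omega
      have h2 : (Finset.univ.filter (fun j : Fin n => (j:ℕ) < 0)) = ∅ := by
        apply Finset.filter_false_of_mem; intro j _; omega
      rw [h1, h2, hμ1]; simp
    | succ k ih =>
      intro hk1
      have hk : k < n := hk1
      have ihk := ih (le_of_lt hk)
      set i : Fin n := ⟨k, hk⟩ with hi
      -- old set and new set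
      have hset : (Finset.univ.filter (fun ω : Ω => ∀ j : Fin n, (j:ℕ) < k + 1 → X j ω = a j))
          = Finset.univ.filter (fun ω => X i ω = a i ∧ ∀ j : Fin n, j < i → X j ω = a j) := by
        apply Finset.filter_congr
        intro ω _
        constructor
        · intro h
          refine ⟨h i (by simp [hi]), fun j hj => h j ?_⟩
          have : (j:ℕ) < k := hj
          omega
        · rintro ⟨h1, h2⟩ j hj
          rcases Nat.lt_succ_iff_lt_or_eq.mp hj with h | h
          · exact h2 j h
          · have : j = i := Fin.ext h
            rw [this]; exact h1
      have hdeno : (Finset.univ.filter (fun ω : Ω => ∀ j : Fin n, j < i → X j ω = a j))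
          = Finset.univ.filter (fun ω : Ω => ∀ j : Fin n, (j:ℕ) < k → X j ω = a j) := by
        apply Finset.filter_congr; intro ω _
        constructor
        · intro h j hj; exact h j hj
        · intro h j hj; exact h j hj
      -- exponent identity
      have hexp : (Finset.univ.filter (fun j : Fin n => (j:ℕ) < k + 1))
          = insert i (Finset.univ.filter (fun j : Fin n => (j:ℕ) < k)) := by
        ext j
        simp only [Finset.mem_filter, Finset.mem_univ, true_and, Finset.mem_insert]
        constructor
        · intro h
          rcases Nat.lt_succ_iff_lt_or_eq.mp h with h | h
          · exact Or.inr h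
          · exact Or.inl (Fin.ext h)
        · rintro (rfl | h)
          · exact Nat.lt_succ_self k
          · omega
      have hinotmem : i ∉ Finset.univ.filter (fun j : Fin n => (j:ℕ) < k) := by
        simp [hi]
      have hexp2 : (∑ j ∈ Finset.univ.filter (fun j : Fin n => (j:ℕ) < k + 1), a j)
          = a i + ∑ j ∈ Finset.univ.filter (fun j : Fin n => (j:ℕ) < k), a j := by
        rw [hexp, Finset.sum_insert hinotmem]
      rw [hset, hexp2, pow_add]
      set D := ∑ ω ∈ Finset.univ.filter (fun ω : Ω => ∀ j : Fin n, (j:ℕ) < k → X j ω = a j), μ ω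
        with hD
      -- main step : new ≤ p ^ (a i) * D
      have hstep : (∑ ω ∈ Finset.univ.filter
          (fun ω => X i ω = a i ∧ ∀ j : Fin n, j < i → X j ω = a j), μ ω) ≤ p ^ (a i) * D := by
        rcases eq_or_lt_of_le (hnonneg _) with hD0 | hDpos
        · -- D = 0
          have hsub : (Finset.univ.filter
              (fun ω => X i ω = a i ∧ ∀ j : Fin n, j < i → X j ω = a j))
              ⊆ Finset.univ.filter (fun ω : Ω => ∀ j : Fin n, (j:ℕ) < k → X j ω = a j) := by
            intro ω hω
            simp only [Finset.mem_filter, Finset.mem_univ, true_and] at hω ⊢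
            intro j hj; exact hω.2 j hj
          calc _ ≤ D := hmono _ _ hsub
            _ = 0 := hD0.symm
            _ ≤ _ := mul_nonneg (pow_nonneg hp0 _) hD0.le
        · have hDpos' : 0 < ∑ ω ∈ Finset.univ.filter
              (fun ω : Ω => ∀ j : Fin n, j < i → X j ω = a j), μ ω := by
            rw [hdeno]; exact hDpos
          obtain ⟨hc1, hc2⟩ := hcond i a hDpos'
          rw [hdeno] at hc1 hc2
          rw [div_le_iff₀ hDpos] at hc1 hc2
          have hai := ha i
          interval_cases h : a i
          · -- a i = 0
            have hsub : (Finset.univ.filter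
                (fun ω => X i ω = 0 ∧ ∀ j : Fin n, j < i → X j ω = a j))
                ⊆ Finset.univ.filter (fun ω : Ω => ∀ j : Fin n, (j:ℕ) < k → X j ω = a j) := by
              intro ω hω
              simp only [Finset.mem_filter, Finset.mem_univ, true_and] at hω ⊢
              intro j hj; exact hω.2 j hj
            simpa using hmono _ _ hsub
          · simpa using hc1
          · simpa using hc2
      calc _ ≤ p ^ (a i) * D := hstep
        _ ≤ p ^ (a i) * p ^ (∑ j ∈ Finset.univ.filter (fun j : Fin n => (j:ℕ) < k), a j) :=
          mul_le_mul_of_nonneg_left ihk (pow_nonneg hp0 _)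
  -- specialize to k = n
  have key' : ∀ (a : Fin n → ℕ), (∀ i, a i ≤ 2) →
      (∑ ω ∈ Finset.univ.filter (fun ω => ∀ j : Fin n, X j ω = a j), μ ω)
        ≤ p ^ (∑ j, a j) := by
    intro a ha
    have h := key a ha n le_rfl
    have h1 : (Finset.univ.filter (fun ω : Ω => ∀ j : Fin n, (j:ℕ) < n → X j ω = a j))
        = Finset.univ.filter (fun ω : Ω => ∀ j : Fin n, X j ω = a j) := by
      apply Finset.filter_congr; intro ω _
      constructor
      · intro hh j; exact hh j j.isLt
      · intro hh j _; exact hh j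
    have h2 : (Finset.univ.filter (fun j : Fin n => (j:ℕ) < n)) = Finset.univ := by
      apply Finset.filter_true_of_mem; intro j _; exact j.isLt
    rwa [h1, h2] at h
  -- decompose the event over tuples
  set T := Finset.univ.filter (fun ω : Ω => ∑ i, X i ω = m) with hT
  have hfib : ∑ ω ∈ T, μ ω
      = ∑ b : Fin n → Fin 3, ∑ ω ∈ T.filter
          (fun ω => (fun i => (⟨X i ω, Nat.lt_succ_of_le (hX i ω)⟩ : Fin 3)) = b), μ ω := by
    exact (Finset.sum_fiberwise T
      (fun ω => (fun i => (⟨X i ω, Nat.lt_succ_of_le (hX i ω)⟩ : Fin 3))) μ).symm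
  rw [hfib]
  have hbound : ∀ b : Fin n → Fin 3,
      (∑ ω ∈ T.filter
          (fun ω => (fun i => (⟨X i ω, Nat.lt_succ_of_le (hX i ω)⟩ : Fin 3)) = b), μ ω)
        ≤ p ^ m := by
    intro b
    by_cases hsum : (∑ j, (b j : ℕ)) = m
    · have hsub : T.filter
          (fun ω => (fun i => (⟨X i ω, Nat.lt_succ_of_le (hX i ω)⟩ : Fin 3)) = b)
          ⊆ Finset.univ.filter (fun ω => ∀ j : Fin n, X j ω = (b j : ℕ)) := by
        intro ω hω
        simp only [hT, Finset.mem_filter, Finset.mem_univ, true_and] at hω ⊢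
        intro j
        have := congrFun hω.2 j
        exact congrArg (Fin.val) this
      calc _ ≤ ∑ ω ∈ Finset.univ.filter (fun ω => ∀ j : Fin n, X j ω = (b j : ℕ)), μ ω :=
            hmono _ _ hsub
        _ ≤ p ^ (∑ j, (b j : ℕ)) := key' _ (fun i => Nat.lt_succ_iff.mp (b i).isLt)
        _ = p ^ m := by rw [hsum]
    · have hempty : T.filter
          (fun ω => (fun i => (⟨X i ω, Nat.lt_succ_of_le (hX i ω)⟩ : Fin 3)) = b) = ∅ := by
        apply Finset.filter_false_of_mem
        intro ω hω hb
        simp only [hT, Finset.mem_filter, Finset.mem_univ, true_and] at hω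
        apply hsum
        rw [← hω]
        apply Finset.sum_congr rfl
        intro j _
        have := congrFun hb j
        exact (congrArg Fin.val this).symm
      rw [hempty]
      simp [pow_nonneg hp0]
  calc _ ≤ ∑ _b : Fin n → Fin 3, p ^ m := Finset.sum_le_sum (fun b _ => hbound b)
    _ = (3:ℝ) ^ n * p ^ m := by
      rw [Finset.sum_const, Finset.card_univ, Fintype.card_fun]
      simp [Fintype.card_fin]
end
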